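/- Let A be a C*-algebra, I = [α,β] a compact interval, F : I → A continuous, and w : I → ℝ continuous and nonnegative. Then (∫_I w(s)·F(s) ds)* · (∫_I w(s)·F(s) ds) ≤ (∫_I w(s) ds) · ∫_I w(s)·F(s)*·F(s) ds in the canonical order of A (operator Cauchy–Schwarz inequality for Bochner integrals). -/

import Mathlib

open MeasureTheory

section Aux

variable {A : Type*} [NormedRing A] [StarRing A] [CStarRing A] [CompleteSpace A]
    [NormedAlgebra ℂ A] [StarModule ℂ A] [PartialOrder A] [StarOrderedRing A]

theorem aux_smul_nonneg (c : ℝ) (hc : 0 ≤ c) {x : A} (hx : 0 ≤ x) : 0 ≤ c • x := by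
  have h := star_left_conjugate_nonneg hx ((Real.sqrt c : ℂ) • (1 : A))
  have : star ((Real.sqrt c : ℂ) • (1 : A)) * x * ((Real.sqrt c : ℂ) • (1 : A)) = c • x := by
    rw [star_smul, star_one, smul_mul_assoc, mul_smul_comm, one_mul, mul_one, smul_smul,
      Complex.star_def, Complex.conj_ofReal, ← Complex.ofReal_mul, Real.mul_self_sqrt hc,
      Complex.coe_smul]
  rwa [this] at h

theorem aux_integral_nonneg {X : Type*} [MeasurableSpace X] {μ : Measure X} [IsFiniteMeasure μ]
    {f : X → A} (hf : ∀ᵐ x ∂μ, 0 ≤ f x) (hfi : Integrable f μ) : 0 ≤ ∫ x, f x ∂μ := by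
  letI : CStarAlgebra A := {}
  rcases eq_or_ne μ 0 with rfl | hμ
  · simp
  · haveI : NeZero μ := ⟨hμ⟩
    have hs : Convex ℝ {x : A | 0 ≤ x} := by
      intro x hx y hy a b ha hb _
      exact add_nonneg (aux_smul_nonneg a ha hx) (aux_smul_nonneg b hb hy)
    have havg : ⨍ x, f x ∂μ ∈ {x : A | 0 ≤ x} :=
      hs.average_mem CStarAlgebra.isClosed_nonneg hf hfi
    have : ∫ x, f x ∂μ = (μ Set.univ).toReal • ⨍ x, f x ∂μ := by
      rw [average_eq, smul_smul, measureReal_def, mul_inv_cancel₀, one_smul]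
      exact ENNReal.toReal_ne_zero.2 ⟨by simpa using hμ, measure_ne_top μ _⟩
    rw [this]
    exact aux_smul_nonneg _ ENNReal.toReal_nonneg havg

end Aux

theorem stmt1 {A : Type*} [NormedRing A] [StarRing A] [CStarRing A] [CompleteSpace A]
    [NormedAlgebra ℂ A] [StarModule ℂ A] [PartialOrder A] [StarOrderedRing A]
    (α β : ℝ) (F : ℝ → A) (hF : ContinuousOn F (Set.Icc α β))
    (w : ℝ → ℝ) (hw : ContinuousOn w (Set.Icc α β))
    (hw0 : ∀ s ∈ Set.Icc α β, 0 ≤ w s) :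
    star (∫ s in Set.Icc α β, w s • F s) * (∫ s in Set.Icc α β, w s • F s) ≤
      (∫ s in Set.Icc α β, w s) • ∫ s in Set.Icc α β, w s • (star (F s) * F s) := by
  set I : Set ℝ := Set.Icc α β with hI
  set μ : Measure ℝ := volume.restrict I with hμdef
  haveI : IsFiniteMeasure μ := by
    constructor
    rw [hμdef, Measure.restrict_apply_univ]
    exact isCompact_Icc.measure_lt_top
  set g : ℝ → A := fun s => w s • F s with hgdef
  set h : ℝ → A := fun s => w s • (star (F s) * F s) with hhdef
  set Gi : A := ∫ s, g s ∂μ with hGi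
  set Hi : A := ∫ s, h s ∂μ with hHi
  set c : ℝ := ∫ s, w s ∂μ with hc
  -- integrability of the basic functions
  have hgc : ContinuousOn g I := hw.smul hF
  have hhc : ContinuousOn h I := hw.smul (hF.star.mul hF)
  have hgi : Integrable g μ := hgc.integrableOn_compact isCompact_Icc
  have hhi : Integrable h μ := hhc.integrableOn_compact isCompact_Icc
  have hsgi : Integrable (fun s => star (g s)) μ :=
    (hgc.star.integrableOn_compact isCompact_Icc)
  -- the product measure
  set ν : Measure (ℝ × ℝ) := μ.prod μ with hν
  have hνr : ν = (volume.prod volume).restrict (I ×ˢ I) := by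
    rw [hν, hμdef, Measure.prod_restrict]
  have hprodK : IsCompact (I ×ˢ I) := isCompact_Icc.prod isCompact_Icc
  have key : ∀ φ : ℝ × ℝ → A, ContinuousOn φ (I ×ˢ I) → Integrable φ ν := by
    intro φ hφ
    rw [hνr]
    exact hφ.integrableOn_compact hprodK
  have hwfst : ContinuousOn (fun p : ℝ × ℝ => w p.1) (I ×ˢ I) :=
    hw.comp continuous_fst.continuousOn (fun p hp => hp.1)
  have hwsnd : ContinuousOn (fun p : ℝ × ℝ => w p.2) (I ×ˢ I) :=
    hw.comp continuous_snd.continuousOn (fun p hp => hp.2)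
  have hgfst : ContinuousOn (fun p : ℝ × ℝ => g p.1) (I ×ˢ I) :=
    hgc.comp continuous_fst.continuousOn (fun p hp => hp.1)
  have hgsnd : ContinuousOn (fun p : ℝ × ℝ => g p.2) (I ×ˢ I) :=
    hgc.comp continuous_snd.continuousOn (fun p hp => hp.2)
  have hhfst : ContinuousOn (fun p : ℝ × ℝ => h p.1) (I ×ˢ I) :=
    hhc.comp continuous_fst.continuousOn (fun p hp => hp.1)
  have hhsnd : ContinuousOn (fun p : ℝ × ℝ => h p.2) (I ×ˢ I) :=
    hhc.comp continuous_snd.continuousOn (fun p hp => hp.2)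
  -- the four terms
  have hk1 : Integrable (fun p : ℝ × ℝ => w p.2 • h p.1) ν := key _ (hwsnd.smul hhfst)
  have hk2 : Integrable (fun p : ℝ × ℝ => w p.1 • h p.2) ν := key _ (hwfst.smul hhsnd)
  have hk3 : Integrable (fun p : ℝ × ℝ => star (g p.1) * g p.2) ν := key _ (hgfst.star.mul hgsnd)
  have hk4 : Integrable (fun p : ℝ × ℝ => star (g p.2) * g p.1) ν := key _ (hgsnd.star.mul hgfst)
  -- values of the four double integrals
  have h1 : ∫ p, w p.2 • h p.1 ∂ν = c • Hi := by
    rw [hν, integral_prod _ hk1]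
    simp_rw [integral_smul_const w]
    rw [← hc, integral_smul, ← hHi]
  have h2 : ∫ p, w p.1 • h p.2 ∂ν = c • Hi := by
    rw [hν, integral_prod _ hk2]
    simp_rw [integral_smul, ← hHi]
    rw [integral_smul_const w, ← hc]
  have hstar : ∫ s, star (g s) ∂μ = star Gi := by
    have := ContinuousLinearEquiv.integral_comp_comm (starL' ℝ : A ≃L[ℝ] A) (μ := μ) g
    simpa [hGi] using this
  have h3 : ∫ p, star (g p.1) * g p.2 ∂ν = star Gi * Gi := by
    rw [hν, integral_prod _ hk3]
    have inner : ∀ s : ℝ, ∫ t, star (g s) * g t ∂μ = star (g s) * Gi := by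
      intro s
      have := ContinuousLinearMap.integral_comp_comm
        (ContinuousLinearMap.mul ℝ A (star (g s))) hgi
      simpa [hGi] using this
    simp_rw [inner]
    have := ContinuousLinearMap.integral_comp_comm
      ((ContinuousLinearMap.mul ℝ A).flip Gi) hsgi
    simpa [hstar] using this
  have h4 : ∫ p, star (g p.2) * g p.1 ∂ν = star Gi * Gi := by
    rw [hν, integral_prod _ hk4]
    have inner : ∀ s : ℝ, ∫ t, star (g t) * g s ∂μ = star Gi * g s := by
      intro s
      have := ContinuousLinearMap.integral_comp_comm
        ((ContinuousLinearMap.mul ℝ A).flip (g s)) hsgi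
      simpa [hstar] using this
    simp_rw [inner]
    have := ContinuousLinearMap.integral_comp_comm
      (ContinuousLinearMap.mul ℝ A (star Gi)) hgi
    simpa [hGi] using this
  -- the nonnegative double integrand
  set Φ : ℝ × ℝ → A := fun p => (w p.1 * w p.2) • (star (F p.1 - F p.2) * (F p.1 - F p.2))
    with hΦdef
  have hΦeq : ∀ p : ℝ × ℝ, Φ p =
      w p.2 • h p.1 + w p.1 • h p.2 - star (g p.1) * g p.2 - star (g p.2) * g p.1 := by
    intro p
    simp only [hΦdef, hgdef, hhdef, star_smul, star_trivial]
    simp only [star_sub, sub_mul, mul_sub, smul_mul_assoc, mul_smul_comm, smul_smul, smul_sub]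
    module
  have hΦc : ContinuousOn Φ (I ×ˢ I) := by
    have hFfst : ContinuousOn (fun p : ℝ × ℝ => F p.1) (I ×ˢ I) :=
      hF.comp continuous_fst.continuousOn (fun p hp => hp.1)
    have hFsnd : ContinuousOn (fun p : ℝ × ℝ => F p.2) (I ×ˢ I) :=
      hF.comp continuous_snd.continuousOn (fun p hp => hp.2)
    exact (hwfst.mul hwsnd).smul (((hFfst.sub hFsnd).star).mul (hFfst.sub hFsnd))
  have hΦi : Integrable Φ ν := key _ hΦc
  have hΦnn : 0 ≤ ∫ p, Φ p ∂ν := by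
    apply aux_integral_nonneg _ hΦi
    rw [hνr]
    filter_upwards [ae_restrict_mem (hprodK.isClosed.measurableSet)] with p hp
    exact aux_smul_nonneg _ (mul_nonneg (hw0 _ hp.1) (hw0 _ hp.2)) (star_mul_self_nonneg _)
  -- combine
  have hsplit : ∫ p, Φ p ∂ν = (2 : ℝ) • (c • Hi - star Gi * Gi) := by
    calc ∫ p, Φ p ∂ν
        = ∫ p, (w p.2 • h p.1 + w p.1 • h p.2 - star (g p.1) * g p.2 - star (g p.2) * g p.1) ∂ν :=
          integral_congr_ae (Filter.Eventually.of_forall hΦeq)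
      _ = (2 : ℝ) • (c • Hi - star Gi * Gi) := by
          rw [show (fun p : ℝ × ℝ =>
                w p.2 • h p.1 + w p.1 • h p.2 - star (g p.1) * g p.2 - star (g p.2) * g p.1) =
              ((fun p : ℝ × ℝ => w p.2 • h p.1) + (fun p : ℝ × ℝ => w p.1 • h p.2) -
                (fun p : ℝ × ℝ => star (g p.1) * g p.2)) -
                (fun p : ℝ × ℝ => star (g p.2) * g p.1) from rfl,
            integral_sub' ((hk1.add hk2).sub hk3) hk4, integral_sub' (hk1.add hk2) hk3,
            integral_add' hk1 hk2, h1, h2, h3, h4, two_smul]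
          abel
  have hfinal : 0 ≤ c • Hi - star Gi * Gi := by
    have h2nn : 0 ≤ (2 : ℝ) • (c • Hi - star Gi * Gi) := hsplit ▸ hΦnn
    have := aux_smul_nonneg (2⁻¹ : ℝ) (by norm_num) h2nn
    rwa [smul_smul, show (2⁻¹ : ℝ) * 2 = 1 by norm_num, one_smul] at this
  have := sub_nonneg.mp hfinal
  simpa [hGi, hHi, hc, hgdef, hhdef, hμdef, hI] using this
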